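/- Let p be a probability vector on Fin K with p i ≥ γ/K for all i, where γ ∈ (0,1), and let ĉ : Fin K → ℝ satisfy ∑_i p i ĉ i = 0 and (γ/K)·ĉ i ≤ 1 for all i. Then ∑_i ((p i - γ/K)/(1-γ))·exp((γ/K) ĉ i) ≤ 1 + (γ²/K)/(1-γ)·((1/K)∑_i ĉ i)·(-1) + ((e-2)γ²/K)/(1-γ)·((1/K)∑_i p i ĉ i²). That is, W_{t+1}/W_t ≤ 1 - (γ²/K)/(1-γ)·M₁' + ((e-2)γ²/K)/(1-γ)·M₂ where M₁' = (1/K)∑_i ĉ i and M₂ = (1/K)∑_i p i ĉ i². -/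

import Mathlib

open Finset

lemma exp_le_quad_of_nonpos {x : ℝ} (hx : x ≤ 0) : Real.exp x ≤ 1 + x + x ^ 2 / 2 := by
  have hd : ∀ t : ℝ, HasDerivAt (fun t : ℝ => 1 + t + t ^ 2 / 2 - Real.exp t)
      (1 + t - Real.exp t) t := by
    intro t
    have h1 : HasDerivAt (fun t : ℝ => 1 + t) 1 t := (hasDerivAt_id t).const_add 1
    have h2 : HasDerivAt (fun t : ℝ => t ^ 2 / 2) t t := by
      have := (hasDerivAt_pow 2 t).div_const 2
      simpa using this
    have h3 := (h1.add h2).sub (Real.hasDerivAt_exp t)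
    exact h3
  have hanti : Antitone (fun t : ℝ => 1 + t + t ^ 2 / 2 - Real.exp t) := by
    apply antitone_of_deriv_nonpos
    · exact fun t => (hd t).differentiableAt
    · intro t
      rw [(hd t).deriv]
      have := Real.add_one_le_exp t
      linarith
  have := hanti hx
  simp only [pow_two] at this ⊢
  have h0 : (1:ℝ) + 0 + 0 * 0 / 2 - Real.exp 0 = 0 := by simp
  nlinarith [this]

lemma tsum_shift2 {y : ℝ} (hy : Summable fun n : ℕ => y ^ n / n.factorial) :
    (∑' n : ℕ, y ^ n / n.factorial) = 1 + y + ∑' n : ℕ, y ^ (n + 2) / (n + 2).factorial := by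
  rw [Summable.tsum_eq_zero_add hy, Summable.tsum_eq_zero_add ((summable_nat_add_iff (f := fun n : ℕ => y ^ n / n.factorial) 1).2 hy)]
  simp [Nat.factorial]
  ring

lemma exp_quad {x : ℝ} (hx : x ≤ 1) :
    Real.exp x ≤ 1 + x + (Real.exp 1 - 2) * x ^ 2 := by
  have he2 : (1:ℝ) / 2 ≤ Real.exp 1 - 2 := by
    have := Real.exp_one_gt_d9
    nlinarith
  rcases le_or_gt x 0 with h0 | h0
  · have := exp_le_quad_of_nonpos h0
    nlinarith [sq_nonneg x]
  · have hx0 : (0:ℝ) ≤ x := h0.le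
    have hsx : Summable fun n : ℕ => x ^ n / n.factorial := Real.summable_pow_div_factorial x
    have hs1 : Summable fun n : ℕ => (1:ℝ) ^ n / n.factorial := Real.summable_pow_div_factorial 1
    have hex : Real.exp x = ∑' n : ℕ, x ^ n / n.factorial := by
      rw [Real.exp_eq_exp_ℝ, NormedSpace.exp_eq_tsum_div]
    have he1 : Real.exp 1 = ∑' n : ℕ, (1:ℝ) ^ n / n.factorial := by
      rw [Real.exp_eq_exp_ℝ, NormedSpace.exp_eq_tsum_div]
    have hsx2 : Summable fun n : ℕ => x ^ (n + 2) / (n + 2).factorial :=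
      (summable_nat_add_iff (f := fun n : ℕ => x ^ n / n.factorial) 2).2 hsx
    have hs12 : Summable fun n : ℕ => (1:ℝ) ^ (n + 2) / (n + 2).factorial :=
      (summable_nat_add_iff (f := fun n : ℕ => (1:ℝ) ^ n / n.factorial) 2).2 hs1
    have htail : (∑' n : ℕ, x ^ (n + 2) / (n + 2).factorial)
        ≤ x ^ 2 * ∑' n : ℕ, (1:ℝ) ^ (n + 2) / (n + 2).factorial := by
      rw [← tsum_mul_left]
      refine Summable.tsum_le_tsum (fun n => ?_) hsx2 (hs12.mul_left _)
      have hpow : x ^ (n + 2) ≤ x ^ 2 := pow_le_pow_of_le_one hx0 hx (by omega)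
      have hfac : (0:ℝ) < (n + 2).factorial := by positivity
      rw [one_pow, mul_one_div]
      gcongr
    have he1t : (∑' n : ℕ, (1:ℝ) ^ (n + 2) / (n + 2).factorial) = Real.exp 1 - 2 := by
      have := tsum_shift2 hs1
      rw [← he1] at this
      simp only [one_pow] at this ⊢
      linarith
    rw [hex, tsum_shift2 hsx]
    rw [he1t] at htail
    nlinarith [htail]

theorem one_step_weight_growth (K : ℕ) (hK : 1 ≤ K)
    (γ : ℝ) (hγ : γ ∈ Set.Ioo (0:ℝ) 1)
    (p : Fin K → ℝ) (hps : ∑ i, p i = 1) (hp : ∀ i, γ / K ≤ p i)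
    (c : Fin K → ℝ)
    (hzero : ∑ i, p i * c i = 0)
    (hle : ∀ i, (γ / K) * c i ≤ 1) :
    ∑ i, ((p i - γ / K) / (1 - γ)) * Real.exp ((γ / K) * c i)
      ≤ 1 - (γ ^ 2 / K) / (1 - γ) * ((1 / K) * ∑ i, c i)
          + ((Real.exp 1 - 2) * γ ^ 2 / K) / (1 - γ) * ((1 / K) * ∑ i, p i * (c i) ^ 2) := by
  obtain ⟨hγ0, hγ1⟩ := hγ
  have hK0 : (0:ℝ) < K := by exact_mod_cast Nat.lt_of_lt_of_le Nat.zero_lt_one hK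
  have h1γ : (0:ℝ) < 1 - γ := by linarith
  have hE : (0:ℝ) ≤ Real.exp 1 - 2 := by
    have := Real.exp_one_gt_d9; nlinarith
  set E := Real.exp 1 - 2 with hEdef
  have step1 : ∑ i, ((p i - γ / K) / (1 - γ)) * Real.exp ((γ / K) * c i)
      ≤ ∑ i, ((p i - γ / K) / (1 - γ)) * (1 + (γ / K) * c i + E * ((γ / K) * c i) ^ 2) := by
    refine Finset.sum_le_sum fun i _ => ?_
    have ha : 0 ≤ (p i - γ / K) / (1 - γ) := by
      have := hp i
      exact div_nonneg (by linarith) h1γ.le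
    exact mul_le_mul_of_nonneg_left (exp_quad (hle i)) ha
  refine step1.trans ?_
  have hsum1 : ∑ i, ((p i - γ / K) / (1 - γ)) = 1 := by
    rw [← Finset.sum_div, Finset.sum_sub_distrib, hps, Finset.sum_const, Finset.card_univ,
      Fintype.card_fin, nsmul_eq_mul]
    field_simp
  have hsum2 : ∑ i, ((p i - γ / K) / (1 - γ)) * ((γ / K) * c i)
      = -((γ ^ 2 / K ^ 2) / (1 - γ)) * ∑ i, c i := by
    have : ∀ i, ((p i - γ / K) / (1 - γ)) * ((γ / K) * c i)
        = (γ / K) / (1 - γ) * (p i * c i) - (γ ^ 2 / K ^ 2) / (1 - γ) * c i := by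
      intro i; field_simp
    rw [Finset.sum_congr rfl fun i _ => this i, Finset.sum_sub_distrib,
      ← Finset.mul_sum, ← Finset.mul_sum, hzero]
    ring
  have hsum3 : ∑ i, ((p i - γ / K) / (1 - γ)) * ((γ / K) * c i) ^ 2
      ≤ (γ ^ 2 / K ^ 2) / (1 - γ) * ∑ i, p i * c i ^ 2 := by
    rw [Finset.mul_sum]
    refine Finset.sum_le_sum fun i _ => ?_
    have hci : (0:ℝ) ≤ c i ^ 2 := sq_nonneg _
    have hgk : (0:ℝ) ≤ γ / K := by positivity
    have h1 : ((p i - γ / K) / (1 - γ)) * ((γ / K) * c i) ^ 2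
        = (γ ^ 2 / K ^ 2) / (1 - γ) * ((p i - γ / K) * c i ^ 2) := by
      field_simp
    rw [h1]
    have h2 : (p i - γ / K) * c i ^ 2 ≤ p i * c i ^ 2 := by nlinarith
    have h3 : (0:ℝ) ≤ (γ ^ 2 / K ^ 2) / (1 - γ) := by positivity
    exact mul_le_mul_of_nonneg_left h2 h3
  have expand : ∑ i, ((p i - γ / K) / (1 - γ)) * (1 + (γ / K) * c i + E * ((γ / K) * c i) ^ 2)
      = (∑ i, ((p i - γ / K) / (1 - γ)))
        + (∑ i, ((p i - γ / K) / (1 - γ)) * ((γ / K) * c i))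
        + E * ∑ i, ((p i - γ / K) / (1 - γ)) * ((γ / K) * c i) ^ 2 := by
    rw [Finset.mul_sum, ← Finset.sum_add_distrib, ← Finset.sum_add_distrib]
    exact Finset.sum_congr rfl fun i _ => by ring
  rw [expand, hsum1, hsum2]
  have hfinal : E * ∑ i, ((p i - γ / K) / (1 - γ)) * ((γ / K) * c i) ^ 2
      ≤ E * ((γ ^ 2 / K ^ 2) / (1 - γ) * ∑ i, p i * c i ^ 2) :=
    mul_le_mul_of_nonneg_left hsum3 hE
  have heq : 1 + -((γ ^ 2 / K ^ 2) / (1 - γ)) * (∑ i, c i)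
      + E * ((γ ^ 2 / K ^ 2) / (1 - γ) * ∑ i, p i * c i ^ 2)
      = 1 - (γ ^ 2 / K) / (1 - γ) * ((1 / K) * ∑ i, c i)
        + (E * γ ^ 2 / K) / (1 - γ) * ((1 / K) * ∑ i, p i * (c i) ^ 2) := by
    field_simp
    ring
  linarith [hfinal]
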